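/- Well-definedness of the isolated and ◇-type systems: (i) For l = 2, the set R(BB_2^{∨(2)∗}) = (R(BC_2)_s + ℤa + ℤb) ∪ (R(BC_2)_m + L_{0,0}) ∪ (R(BC_2)_l + 2ℤa + 2ℤb) is a non-reduced elliptic root system in (F,I) with marking ℝa whose quotient modulo ℝa is the image of R(BB_2^∨). (ii) For any l ≥ 1, the set R(C^∨C_l^{(2)◇}) = (R(C^∨C_l)_s + ℤa) ∪ (R(C^∨C_l)_m + ℤa) ∪ (R(BC_l)_l + {ma + 2nb : m,n ∈ ℤ, m ≡ n mod 2}) is a non-reduced elliptic root system in (F,I) with marking ℝa whose quotient modulo ℝa is the image of R(C^∨C_l). -/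
import Mathlib


open Pointwise

noncomputable section

/-- The ambient space `F = ℝ^{l+2}`, with coordinates `0,…,l-1` for the finite part
and coordinates `l, l+1` corresponding to the radical vectors `a, b`. -/
abbrev V (l : ℕ) : Type := Fin (l + 2) → ℝ

/-- The orthonormal vectors `ε_i`. -/
def εv (l : ℕ) (i : Fin l) : V l := Pi.single (Fin.castAdd 2 i) 1

/-- The radical vector `a`. -/
def av (l : ℕ) : V l := Pi.single (Fin.natAdd l (0 : Fin 2)) 1

/-- The radical vector `b`. -/
def bv (l : ℕ) : V l := Pi.single (Fin.natAdd l (1 : Fin 2)) 1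

/-- The positive semi-definite symmetric bilinear form `I` of signature `(l,2,0)`,
with radical `ℝa + ℝb`. -/
def Iform (l : ℕ) (x y : V l) : ℝ :=
  ∑ i : Fin l, x (Fin.castAdd 2 i) * y (Fin.castAdd 2 i)

/-- Short roots of the finite root system `BC_l`. -/
def BCs (l : ℕ) : Set (V l) := ⋃ i : Fin l, {εv l i, -εv l i}

/-- Middle-length roots of the finite root system `BC_l`. -/
def BCm (l : ℕ) : Set (V l) :=
  ⋃ (i : Fin l) (j : Fin l) (_ : i ≠ j),
    {εv l i + εv l j, εv l i - εv l j, -εv l i - εv l j}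

/-- Long roots of the finite root system `BC_l`. -/
def BCl (l : ℕ) : Set (V l) := ⋃ i : Fin l, {(2 : ℝ) • εv l i, -((2 : ℝ) • εv l i)}

/-- The finite root system `BC_l`. -/
def BCfull (l : ℕ) : Set (V l) := BCs l ∪ BCm l ∪ BCl l

/-- The subset `(kℤ)v` of `F`. -/
def Zv (l : ℕ) (k : ℤ) (v : V l) : Set (V l) := {x | ∃ n : ℤ, x = ((k * n : ℤ) : ℝ) • v}

/-- The subset `(kℤ)a`. -/
def Za (l : ℕ) (k : ℤ) : Set (V l) := Zv l k (av l)

/-- The subset `(kℤ)b`. -/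
def Zb (l : ℕ) (k : ℤ) : Set (V l) := Zv l k (bv l)

/-- The subset `(1+2ℤ)a`. -/
def oddZa (l : ℕ) : Set (V l) := {x | ∃ n : ℤ, x = ((1 + 2 * n : ℤ) : ℝ) • av l}

/-- The subset `L_{i,j}^{s1,s2} = {s2·m·a + s1·n·b : (m-i)(n-j) ≡ 0 mod 2}`;
`L_{i,j} = Lset l i j 1 1`. -/
def Lset (l : ℕ) (i j s1 s2 : ℤ) : Set (V l) :=
  {x | ∃ m n : ℤ, (2 : ℤ) ∣ ((m - i) * (n - j)) ∧
    x = ((s2 * m : ℤ) : ℝ) • av l + ((s1 * n : ℤ) : ℝ) • bv l}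

/-- The subset `{ma + 2nb : m ≡ n mod 2}` occurring in the ◇-type system. -/
def diaL (l : ℕ) : Set (V l) :=
  {x | ∃ m n : ℤ, (2 : ℤ) ∣ (m - n) ∧ x = ((m : ℤ) : ℝ) • av l + ((2 * n : ℤ) : ℝ) • bv l}

/-- The four types of non-reduced affine root systems. -/
inductive AffType | BCC | CvBC | BBv | CvC

/-- First tier number: the multiplier of `ℤb` on the middle part. -/
def tfm : AffType → ℤ | .BCC => 1 | .CvBC => 2 | .BBv => 1 | .CvC => 2

/-- The multiplier of `ℤb` on the long part. -/
def tfl : AffType → ℤ | .BCC => 1 | .CvBC => 4 | .BBv => 2 | .CvC => 2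

/-- Short part of the affine root system `R(X_l)`. -/
def AffS (l : ℕ) (_X : AffType) : Set (V l) := BCs l + Zb l 1

/-- Middle part of the affine root system `R(X_l)`. -/
def AffM (l : ℕ) (X : AffType) : Set (V l) := BCm l + Zb l (tfm X)

/-- Long part of the affine root system `R(X_l)`. -/
def AffL (l : ℕ) (X : AffType) : Set (V l) := BCl l + Zb l (tfl X)

/-- The affine root system `R(X_l)` for `X ∈ {BCC, C^∨BC, BB^∨, C^∨C}`. -/
def Aff (l : ℕ) (X : AffType) : Set (V l) := AffS l X ∪ AffM l X ∪ AffL l X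

/-- The reduced classical types `BC_l^{(1,2)}, BC_l^{(4,2)}, BC_l^{(2,2)σ}(1), BC_l^{(2,2)σ}(2)`
(for `X = BCC, C^∨BC, BB^∨, C^∨C` respectively). -/
def redClassical (l : ℕ) (X : AffType) : Set (V l) :=
  (AffS l X + Za l 1) ∪ (AffM l X + Za l 1) ∪ (AffL l X + oddZa l)

/-- `R(BC_l^{(1,1)∗})`. -/
def RBC11star (l : ℕ) : Set (V l) :=
  (AffS l .BCC + Za l 1) ∪ (AffM l .BCC + Za l 1) ∪ (BCl l + Lset l 1 1 1 1)

/-- `R(BC_l^{(4,4)∗})`. -/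
def RBC44star (l : ℕ) : Set (V l) :=
  (BCs l + Lset l 1 1 1 1) ∪ (AffM l .CvBC + Za l 2) ∪ (AffL l .CvBC + Za l 4)

/-- `R(X_l^{(1)})`. -/
def E1 (l : ℕ) (X : AffType) : Set (V l) := Aff l X + Za l 1

/-- `R(X_l^{(2)}(i))`. -/
def E2 (l : ℕ) (X : AffType) (i : ℤ) : Set (V l) :=
  (AffS l X + Za l 1) ∪ (AffM l X + Za l i) ∪ (AffL l X + Za l 2)

/-- `R(X_l^{(4)})`. -/
def E4 (l : ℕ) (X : AffType) : Set (V l) :=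
  (AffS l X + Za l 1) ∪ (AffM l X + Za l 2) ∪ (AffL l X + Za l 4)

/-- `R(BCC_l^{(1)∗})`-type systems: `BCC1star l 0 0 = R(BCC_l^{(1)∗_0})`,
`BCC1star l 0 1 = R(BCC_l^{(1)∗_{0'}})`, `BCC1star l 1 1 = R(BCC_l^{(1)∗_1}) = R(BC_l^{(1,1)∗})`. -/
def BCC1star (l : ℕ) (i j : ℤ) : Set (V l) :=
  (AffS l .BCC + Za l 1) ∪ (AffM l .BCC + Za l 1) ∪ (BCl l + Lset l i j 1 1)

/-- `R(BCC_l^{(2)∗_p})`. -/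
def BCC2star (l : ℕ) (p : ℤ) : Set (V l) :=
  (AffS l .BCC + Za l 1) ∪ (AffM l .BCC + Za l 2) ∪ (BCl l + Lset l p p 1 2)

/-- `R(C^∨BC_l^{(2)∗_p})`. -/
def CvBC2star (l : ℕ) (p : ℤ) : Set (V l) :=
  (BCs l + Lset l p p 1 1) ∪ (AffM l .CvBC + Za l 2) ∪ (AffL l .CvBC + Za l 2)

/-- `R(C^∨BC_l^{(4)∗})`-type systems: `CvBC4star l 0 0 = R(C^∨BC_l^{(4)∗_0})`,
`CvBC4star l 0 1 = R(C^∨BC_l^{(4)∗_{0'}})`, `CvBC4star l 1 1 = R(C^∨BC_l^{(4)∗_1}) = R(BC_l^{(4,4)∗})`. -/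
def CvBC4star (l : ℕ) (i j : ℤ) : Set (V l) :=
  (BCs l + Lset l i j 1 1) ∪ (AffM l .CvBC + Za l 2) ∪ (AffL l .CvBC + Za l 4)

/-- `R(BB_2^{∨(2)∗})` (its defining pattern, written for general `l`). -/
def BB2star (l : ℕ) : Set (V l) :=
  (BCs l + Za l 1 + Zb l 1) ∪ (BCm l + Lset l 0 0 1 1) ∪ (BCl l + Za l 2 + Zb l 2)

/-- `R(C^∨C_l^{(1)∗_p})`. -/
def CvC1star (l : ℕ) (p : ℤ) : Set (V l) :=
  (AffS l .CvC + Za l 1) ∪ (AffM l .CvC + Za l 1) ∪ (BCl l + Lset l p p 2 1)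

/-- `R(C^∨C_l^{(2)∗})`-type systems: `CvC2star l 0 0 = R(C^∨C_l^{(2)∗_0})`,
`CvC2star l 1 1 = R(C^∨C_l^{(2)∗_1})`, `CvC2star l 1 0 = R(C^∨C_l^{(2)∗_{1'}})`. -/
def CvC2star (l : ℕ) (i j : ℤ) : Set (V l) :=
  (BCs l + Lset l 0 0 1 1) ∪ (AffM l .CvC + Za l 2) ∪ (BCl l + Lset l i j 2 2)

/-- `R(C^∨C_l^{(2)∗_s})`. -/
def CvC2starS (l : ℕ) : Set (V l) :=
  (BCs l + Lset l 0 0 1 1) ∪ (AffM l .CvC + Za l 2) ∪ (AffL l .CvC + Za l 2)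

/-- `R(C^∨C_l^{(2)∗_l})`. -/
def CvC2starL (l : ℕ) : Set (V l) :=
  (AffS l .CvC + Za l 1) ∪ (AffM l .CvC + Za l 2) ∪ (BCl l + Lset l 0 0 2 2)

/-- `R(C^∨C_l^{(4)∗_p})`. -/
def CvC4star (l : ℕ) (p : ℤ) : Set (V l) :=
  (BCs l + Lset l p p 1 1) ∪ (AffM l .CvC + Za l 2) ∪ (AffL l .CvC + Za l 4)

/-- `R(C^∨C_l^{(2)◇})`. -/
def CvC2dia (l : ℕ) : Set (V l) :=
  (AffS l .CvC + Za l 1) ∪ (AffM l .CvC + Za l 1) ∪ (BCl l + diaL l)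

/-- The reflection `w_α`. -/
def reflV (l : ℕ) (α x : V l) : V l := x - (2 * Iform l x α / Iform l α α) • α

/-- A generalized root system in `(F, I)`; since `I` has signature `(l,2,0)`, this is
exactly an elliptic root system. -/
structure IsERS (l : ℕ) (R : Set (V l)) : Prop where
  /-- `R` is discrete. -/
  discrete : ∀ x ∈ R, ∃ ε > 0, ∀ y ∈ R, ‖x - y‖ < ε → y = x
  /-- The root lattice `Q(R)` is full in `F`. -/
  spans : Submodule.span ℝ R = ⊤
  /-- roots are non-isotropic. -/
  nonisotropic : ∀ α ∈ R, Iform l α α ≠ 0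
  /-- integrality: `2 I(α,β)/I(α,α) ∈ ℤ`. -/
  integral : ∀ α ∈ R, ∀ β ∈ R, ∃ n : ℤ, 2 * Iform l α β = (n : ℝ) * Iform l α α
  /-- each reflection `w_α` maps `R` onto `R`. -/
  reflects : ∀ α ∈ R, reflV l α '' R = R
  /-- irreducibility. -/
  irred : ∀ R1 R2 : Set (V l), R1 ∪ R2 = R →
    (∀ x ∈ R1, ∀ y ∈ R2, Iform l x y = 0) → R1 = ∅ ∨ R2 = ∅

/-- `R` is reduced. -/
def IsReducedRS (l : ℕ) (R : Set (V l)) : Prop := ∀ α ∈ R, (2 : ℝ) • α ∉ R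

/-- `R` is non-reduced. -/
def IsNonReducedRS (l : ℕ) (R : Set (V l)) : Prop := ∃ α ∈ R, (2 : ℝ) • α ∈ R

/-- The radical `ℝa + ℝb` of `I`. -/
def radSpan (l : ℕ) : Submodule ℝ (V l) := Submodule.span ℝ {av l, bv l}

/-- The marking line `G = ℝa`. -/
def Ga (l : ℕ) : Submodule ℝ (V l) := Submodule.span ℝ {av l}

/-- `G` is a marking of `R`: a one-dimensional subspace of `rad(I)` such that
`G ∩ Q(R)` is full in `G`. -/
def IsMarking (l : ℕ) (R : Set (V l)) (G : Submodule ℝ (V l)) : Prop :=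
  G ≤ radSpan l ∧ Module.finrank ℝ G = 1 ∧
    ∃ v : V l, v ≠ 0 ∧ v ∈ G ∧ v ∈ AddSubgroup.closure R

/-- `φ` rescales the form `I` by the factor `c`. -/
def IsSimilarity (l : ℕ) (φ : V l ≃ₗ[ℝ] V l) (c : ℝ) : Prop :=
  ∀ x y : V l, Iform l (φ x) (φ y) = c * Iform l x y

/-- Isomorphism of root systems in `(F, I)`. -/
def IsoRS (l : ℕ) (R R' : Set (V l)) : Prop :=
  ∃ (φ : V l ≃ₗ[ℝ] V l) (c : ℝ), 0 < c ∧ IsSimilarity l φ c ∧ φ '' R = R'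

/-- Isomorphism of marked root systems (with marking `ℝa` on both sides). -/
def IsoRSa (l : ℕ) (R R' : Set (V l)) : Prop :=
  ∃ (φ : V l ≃ₗ[ℝ] V l) (c : ℝ), 0 < c ∧ IsSimilarity l φ c ∧
    φ '' (Ga l : Set (V l)) = (Ga l : Set (V l)) ∧ φ '' R = R'

/-- The quotient `R/G` (image of `R` in `F/G`) is non-reduced. -/
def QuotNonReduced (l : ℕ) (R : Set (V l)) (G : Submodule ℝ (V l)) : Prop :=
  ∃ α ∈ R, ∃ β ∈ R, G.mkQ β = (2 : ℝ) • G.mkQ α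

/-- The quotient `R/G` is isomorphic, as an affine root system, to the affine root system
`X ⊆ span(ε_1,…,ε_l,b)`: encoded via `p = ψ ∘ (F → F/G)` for an isomorphism
`ψ : F/G ≅ span(ε_1,…,ε_l,b)` with `Ī(u,v) = c·I(ψu,ψv)` and `ψ(R/G) = X`. -/
def QuotIsType (l : ℕ) (R : Set (V l)) (G : Submodule ℝ (V l)) (X : Set (V l)) : Prop :=
  ∃ (p : V l →ₗ[ℝ] V l) (c : ℝ), 0 < c ∧
    LinearMap.ker p = G ∧
    LinearMap.range p = Submodule.span ℝ (Set.range (εv l) ∪ {bv l}) ∧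
    (∀ x y : V l, Iform l x y = c * Iform l (p x) (p y)) ∧
    p '' R = X

end
noncomputable section AuxBasics
open Finset in
variable {l : ℕ}

lemma castAdd_ne_natAdd (i : Fin l) (j : Fin 2) :
    (Fin.castAdd 2 i : Fin (l+2)) ≠ Fin.natAdd l j := by
  intro h
  have := congrArg Fin.val h
  simp [Fin.castAdd, Fin.natAdd] at this
  omega

lemma av_apply (i : Fin l) : av l (Fin.castAdd 2 i) = 0 :=
  Pi.single_eq_of_ne (castAdd_ne_natAdd i 0) 1

lemma bv_apply (i : Fin l) : bv l (Fin.castAdd 2 i) = 0 :=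
  Pi.single_eq_of_ne (castAdd_ne_natAdd i 1) 1

lemma εv_apply (i j : Fin l) :
    εv l i (Fin.castAdd 2 j) = if j = i then 1 else 0 := by
  unfold εv
  rcases eq_or_ne j i with h | h
  · subst h; simp
  · rw [if_neg h, Pi.single_eq_of_ne]
    intro hc
    apply h
    have := congrArg Fin.val hc
    simpa [Fin.ext_iff] using this

lemma Iform_symm (x y : V l) : Iform l x y = Iform l y x := by
  unfold Iform; exact Finset.sum_congr rfl fun i _ => mul_comm _ _

lemma Iform_add_left (x y z : V l) :
    Iform l (x + y) z = Iform l x z + Iform l y z := by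
  unfold Iform
  rw [← Finset.sum_add_distrib]
  exact Finset.sum_congr rfl fun i _ => by simp [add_mul]

lemma Iform_smul_left (c : ℝ) (x z : V l) :
    Iform l (c • x) z = c * Iform l x z := by
  unfold Iform
  rw [Finset.mul_sum]
  exact Finset.sum_congr rfl fun i _ => by simp [mul_assoc]

lemma Iform_neg_left (x z : V l) : Iform l (-x) z = - Iform l x z := by
  have := Iform_smul_left (-1 : ℝ) x z
  simpa using this

lemma Iform_sub_left (x y z : V l) :
    Iform l (x - y) z = Iform l x z - Iform l y z := by
  rw [sub_eq_add_neg, Iform_add_left, Iform_neg_left, sub_eq_add_neg]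

lemma Iform_add_right (x y z : V l) :
    Iform l z (x + y) = Iform l z x + Iform l z y := by
  rw [Iform_symm, Iform_add_left, Iform_symm x z, Iform_symm y z]

lemma Iform_smul_right (c : ℝ) (x z : V l) :
    Iform l z (c • x) = c * Iform l z x := by
  rw [Iform_symm, Iform_smul_left, Iform_symm]

/-- The radical coordinate subspace. -/
def Rad (l : ℕ) : Set (V l) := {x | ∀ i : Fin l, x (Fin.castAdd 2 i) = 0}

lemma Iform_rad_left {x : V l} (hx : x ∈ Rad l) (y : V l) : Iform l x y = 0 := by
  unfold Iform
  exact Finset.sum_eq_zero fun i _ => by rw [hx i, zero_mul]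

lemma Iform_rad_right {x : V l} (hx : x ∈ Rad l) (y : V l) : Iform l y x = 0 := by
  rw [Iform_symm]; exact Iform_rad_left hx y

lemma av_mem_Rad : av l ∈ Rad l := fun i => av_apply i
lemma bv_mem_Rad : bv l ∈ Rad l := fun i => bv_apply i

lemma Rad.add {x y : V l} (hx : x ∈ Rad l) (hy : y ∈ Rad l) : x + y ∈ Rad l :=
  fun i => by simp [Pi.add_apply, hx i, hy i]

lemma Rad.smul {x : V l} (c : ℝ) (hx : x ∈ Rad l) : c • x ∈ Rad l :=
  fun i => by simp [Pi.smul_apply, hx i]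

lemma Rad.sub {x y : V l} (hx : x ∈ Rad l) (hy : y ∈ Rad l) : x - y ∈ Rad l :=
  fun i => by simp [Pi.sub_apply, hx i, hy i]

lemma Iform_addrad_left {r : V l} (hr : r ∈ Rad l) (g y : V l) :
    Iform l (g + r) y = Iform l g y := by
  rw [Iform_add_left, Iform_rad_left hr, add_zero]

lemma Iform_εv (i j : Fin l) :
    Iform l (εv l i) (εv l j) = if i = j then 1 else 0 := by
  unfold Iform
  rcases eq_or_ne i j with h | h
  · subst h
    rw [if_pos rfl, Finset.sum_eq_single i]
    · simp [εv_apply]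
    · intro k _ hk
      simp [εv_apply, hk]
    · simp
  · rw [if_neg h]
    apply Finset.sum_eq_zero
    intro k _
    rcases eq_or_ne k i with rfl | hk
    · simp [εv_apply, (show k ≠ j from h)]
    · simp [εv_apply, hk]

end AuxBasics
noncomputable section AuxParam
variable {l : ℕ}

/-- sign predicate -/
def Sgn (s : ℤ) : Prop := s = 1 ∨ s = -1

lemma Sgn.one : Sgn 1 := Or.inl rfl
lemma Sgn.negone : Sgn (-1) := Or.inr rfl
lemma Sgn.mul {s t : ℤ} (hs : Sgn s) (ht : Sgn t) : Sgn (s*t) := by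
  rcases hs with rfl|rfl <;> rcases ht with rfl|rfl <;> simp [Sgn]
lemma Sgn.neg {s : ℤ} (hs : Sgn s) : Sgn (-s) := by
  rcases hs with rfl|rfl <;> simp [Sgn]
lemma Sgn.sq {s : ℤ} (hs : Sgn s) : s * s = 1 := by
  rcases hs with rfl|rfl <;> norm_num
lemma Sgn.sqR {s : ℤ} (hs : Sgn s) : (s:ℝ) * (s:ℝ) = 1 := by
  have := hs.sq; exact_mod_cast congrArg (fun n : ℤ => (n:ℝ)) this

lemma mem_BCs_iff {x : V l} :
    x ∈ BCs l ↔ ∃ (i : Fin l) (s : ℤ), Sgn s ∧ x = (s:ℝ) • εv l i := by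
  unfold BCs
  simp only [Set.mem_iUnion, Set.mem_insert_iff, Set.mem_singleton_iff]
  constructor
  · rintro ⟨i, h | h⟩
    · exact ⟨i, 1, Sgn.one, by simp [h]⟩
    · exact ⟨i, -1, Sgn.negone, by simp [h]⟩
  · rintro ⟨i, s, hs, rfl⟩
    rcases hs with rfl|rfl
    · exact ⟨i, Or.inl (by simp)⟩
    · exact ⟨i, Or.inr (by simp)⟩

lemma mem_BCm_iff {x : V l} :
    x ∈ BCm l ↔ ∃ (i j : Fin l), i ≠ j ∧ ∃ s t : ℤ, Sgn s ∧ Sgn t ∧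
      x = (s:ℝ) • εv l i + (t:ℝ) • εv l j := by
  unfold BCm
  simp only [Set.mem_iUnion, Set.mem_insert_iff, Set.mem_singleton_iff]
  constructor
  · rintro ⟨i, j, hij, h | h | h⟩
    · exact ⟨i, j, hij, 1, 1, Sgn.one, Sgn.one, by rw [h]; module⟩
    · exact ⟨i, j, hij, 1, -1, Sgn.one, Sgn.negone, by rw [h]; push_cast; module⟩
    · exact ⟨i, j, hij, -1, -1, Sgn.negone, Sgn.negone, by rw [h]; push_cast; module⟩
  · rintro ⟨i, j, hij, s, t, hs, ht, rfl⟩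
    rcases hs with rfl|rfl <;> rcases ht with rfl|rfl
    · exact ⟨i, j, hij, Or.inl (by push_cast; module)⟩
    · exact ⟨i, j, hij, Or.inr (Or.inl (by push_cast; module))⟩
    · exact ⟨j, i, hij.symm, Or.inr (Or.inl (by push_cast; module))⟩
    · exact ⟨i, j, hij, Or.inr (Or.inr (by push_cast; module))⟩

lemma mem_BCl_iff {x : V l} :
    x ∈ BCl l ↔ ∃ (i : Fin l) (s : ℤ), Sgn s ∧ x = (s:ℝ) • ((2:ℝ) • εv l i) := by
  unfold BCl
  simp only [Set.mem_iUnion, Set.mem_insert_iff, Set.mem_singleton_iff]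
  constructor
  · rintro ⟨i, h | h⟩
    · exact ⟨i, 1, Sgn.one, by simp [h]⟩
    · exact ⟨i, -1, Sgn.negone, by rw [h]; push_cast; module⟩
  · rintro ⟨i, s, hs, rfl⟩
    rcases hs with rfl|rfl
    · exact ⟨i, Or.inl (by simp)⟩
    · exact ⟨i, Or.inr (by push_cast; module)⟩

lemma Iform_ss (s t : ℤ) (i j : Fin l) :
    Iform l ((s:ℝ) • εv l i) ((t:ℝ) • εv l j)
      = (s:ℝ) * (t:ℝ) * (if i = j then 1 else 0) := by
  rw [Iform_smul_left, Iform_smul_right, Iform_εv]; ring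

lemma Iform_BCs_self {f : V l} (hf : f ∈ BCs l) : Iform l f f = 1 := by
  rw [mem_BCs_iff] at hf
  obtain ⟨i, s, hs, rfl⟩ := hf
  rw [Iform_ss]
  simp [hs.sqR]

lemma Iform_BCm_self {f : V l} (hf : f ∈ BCm l) : Iform l f f = 2 := by
  rw [mem_BCm_iff] at hf
  obtain ⟨i, j, hij, s, t, hs, ht, rfl⟩ := hf
  rw [Iform_add_left, Iform_add_right, Iform_add_right, Iform_ss, Iform_ss,
    Iform_ss, Iform_ss]
  simp [hij, hij.symm, hs.sqR, ht.sqR]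
  ring

lemma Iform_BCl_self {f : V l} (hf : f ∈ BCl l) : Iform l f f = 4 := by
  rw [mem_BCl_iff] at hf
  obtain ⟨i, s, hs, rfl⟩ := hf
  rw [Iform_smul_left, Iform_smul_right, Iform_smul_left, Iform_smul_right, Iform_εv]
  have h2 := hs.sqR
  rw [if_pos rfl]
  nlinarith [hs.sqR]

end AuxParam
noncomputable section AuxRefl
variable {l : ℕ}

section
attribute [local simp] Iform_add_left Iform_add_right Iform_smul_left
  Iform_smul_right Iform_εv

lemma refl_SS {g f : V l} (hg : g ∈ BCs l) (hf : f ∈ BCs l) :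
    ∃ k : ℤ, 2 * Iform l g f = (k:ℝ) * Iform l f f ∧ g - (k:ℝ) • f ∈ BCs l := by
  rw [mem_BCs_iff] at hg hf
  obtain ⟨p, u, hu, rfl⟩ := hg
  obtain ⟨i, s, hs, rfl⟩ := hf
  rcases eq_or_ne p i with rfl | hpi
  · refine ⟨2*(u*s), ?_, ?_⟩
    · simp only [Iform_smul_left, Iform_smul_right, Iform_εv]
      push_cast [if_pos rfl]
      rcases hu with rfl|rfl <;> rcases hs with rfl|rfl <;> norm_num
    · rw [mem_BCs_iff]
      refine ⟨p, -u, hu.neg, ?_⟩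
      push_cast
      match_scalars
      rcases hu with rfl|rfl <;> rcases hs with rfl|rfl <;> norm_num
  · refine ⟨0, ?_, ?_⟩
    · simp [hpi]
    · rw [mem_BCs_iff]
      exact ⟨p, u, hu, by push_cast; module⟩

lemma refl_SM {g f : V l} (hg : g ∈ BCs l) (hf : f ∈ BCm l) :
    ∃ k : ℤ, 2 * Iform l g f = (k:ℝ) * Iform l f f ∧ g - (k:ℝ) • f ∈ BCs l := by
  rw [mem_BCs_iff] at hg
  rw [mem_BCm_iff] at hf
  obtain ⟨p, u, hu, rfl⟩ := hg
  obtain ⟨i, j, hij, s, t, hs, ht, rfl⟩ := hf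
  rcases eq_or_ne p i with rfl | hpi
  · refine ⟨u*s, ?_, ?_⟩
    · simp [hij, Ne.symm hij]
      push_cast
      rcases hu with rfl|rfl <;> rcases hs with rfl|rfl <;>
        rcases ht with rfl|rfl <;> norm_num
    · rw [mem_BCs_iff]
      refine ⟨j, -(u*(s*t)), (hu.mul (hs.mul ht)).neg, ?_⟩
      push_cast
      match_scalars <;>
        (rcases hu with rfl|rfl <;> rcases hs with rfl|rfl <;>
          rcases ht with rfl|rfl <;> norm_num)
  · rcases eq_or_ne p j with rfl | hpj
    · refine ⟨u*t, ?_, ?_⟩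
      · simp [hij, Ne.symm hij, hpi]
        push_cast
        rcases hu with rfl|rfl <;> rcases hs with rfl|rfl <;>
          rcases ht with rfl|rfl <;> norm_num
      · rw [mem_BCs_iff]
        refine ⟨i, -(u*(t*s)), (hu.mul (ht.mul hs)).neg, ?_⟩
        push_cast
        match_scalars <;>
          (rcases hu with rfl|rfl <;> rcases hs with rfl|rfl <;>
            rcases ht with rfl|rfl <;> norm_num)
    · refine ⟨0, ?_, ?_⟩
      · simp [hij, Ne.symm hij, hpi, hpj]
      · rw [mem_BCs_iff]
        exact ⟨p, u, hu, by push_cast; module⟩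

lemma refl_SL {g f : V l} (hg : g ∈ BCs l) (hf : f ∈ BCl l) :
    ∃ k : ℤ, 2 * Iform l g f = (k:ℝ) * Iform l f f ∧ g - (k:ℝ) • f ∈ BCs l := by
  rw [mem_BCs_iff] at hg
  rw [mem_BCl_iff] at hf
  obtain ⟨p, u, hu, rfl⟩ := hg
  obtain ⟨i, s, hs, rfl⟩ := hf
  rcases eq_or_ne p i with rfl | hpi
  · refine ⟨u*s, ?_, ?_⟩
    · simp only [Iform_smul_left, Iform_smul_right, Iform_εv]
      push_cast [if_pos rfl]
      rcases hu with rfl|rfl <;> rcases hs with rfl|rfl <;> norm_num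
    · rw [mem_BCs_iff]
      refine ⟨p, -u, hu.neg, ?_⟩
      push_cast
      match_scalars
      rcases hu with rfl|rfl <;> rcases hs with rfl|rfl <;> norm_num
  · refine ⟨0, ?_, ?_⟩
    · simp [hpi]
    · rw [mem_BCs_iff]
      exact ⟨p, u, hu, by push_cast; module⟩

lemma refl_MS {g f : V l} (hg : g ∈ BCm l) (hf : f ∈ BCs l) :
    ∃ k : ℤ, 2 * Iform l g f = (k:ℝ) * Iform l f f ∧
      g - (k:ℝ) • f ∈ BCm l ∧ 2 ∣ k := by
  rw [mem_BCm_iff] at hg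
  rw [mem_BCs_iff] at hf
  obtain ⟨p, q, hpq, u, v, hu, hv, rfl⟩ := hg
  obtain ⟨i, s, hs, rfl⟩ := hf
  rcases eq_or_ne p i with rfl | hpi
  · refine ⟨2*(u*s), ?_, ?_, ⟨u*s, rfl⟩⟩
    · simp [Ne.symm hpq]
      push_cast
      rcases hu with rfl|rfl <;> rcases hs with rfl|rfl <;> norm_num
    · rw [mem_BCm_iff]
      refine ⟨p, q, hpq, -u, v, hu.neg, hv, ?_⟩
      push_cast
      match_scalars <;>
        (rcases hu with rfl|rfl <;> rcases hs with rfl|rfl <;> norm_num)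
  · rcases eq_or_ne q i with rfl | hqi
    · refine ⟨2*(v*s), ?_, ?_, ⟨v*s, rfl⟩⟩
      · simp [hpi]
        push_cast
        rcases hv with rfl|rfl <;> rcases hs with rfl|rfl <;> norm_num
      · rw [mem_BCm_iff]
        refine ⟨p, q, hpq, u, -v, hu, hv.neg, ?_⟩
        push_cast
        match_scalars <;>
          (rcases hv with rfl|rfl <;> rcases hs with rfl|rfl <;> norm_num)
    · refine ⟨0, ?_, ?_, ⟨0, rfl⟩⟩
      · simp [hpi, hqi]
      · rw [mem_BCm_iff]
        exact ⟨p, q, hpq, u, v, hu, hv, by push_cast; module⟩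

lemma three_distinct_ne_two {a b c : Fin l} (hab : a ≠ b) (hbc : b ≠ c)
    (hac : a ≠ c) : l ≠ 2 := by
  intro hl2
  subst hl2
  have ha := a.isLt; have hb := b.isLt; have hc := c.isLt
  have hab' : a.val ≠ b.val := fun h => hab (Fin.ext h)
  have hbc' : b.val ≠ c.val := fun h => hbc (Fin.ext h)
  have hac' : a.val ≠ c.val := fun h => hac (Fin.ext h)
  omega

lemma refl_MM {g f : V l} (hg : g ∈ BCm l) (hf : f ∈ BCm l) :
    ∃ k : ℤ, 2 * Iform l g f = (k:ℝ) * Iform l f f ∧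
      g - (k:ℝ) • f ∈ BCm l ∧ (l = 2 → 2 ∣ k) := by
  rw [mem_BCm_iff] at hg hf
  obtain ⟨p, q, hpq, u, v, hu, hv, rfl⟩ := hg
  obtain ⟨i, j, hij, s, t, hs, ht, rfl⟩ := hf
  rcases eq_or_ne p i with rfl | hpi
  · -- i = p
    have hpj : p ≠ j := hij
    have hqi : q ≠ p := Ne.symm hpq
    rcases eq_or_ne q j with rfl | hqj
    · -- (i,j) = (p,q)
      refine ⟨u*s + v*t, ?_, ?_, fun _ => ?_⟩
      · simp [hpj, hqi]
        push_cast
        rcases hu with rfl|rfl <;> rcases hv with rfl|rfl <;>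
          rcases hs with rfl|rfl <;> rcases ht with rfl|rfl <;> norm_num
      · rw [mem_BCm_iff]
        refine ⟨p, q, hpq, -(v*(t*s)), -(u*(s*t)), (hv.mul (ht.mul hs)).neg,
          (hu.mul (hs.mul ht)).neg, ?_⟩
        push_cast
        match_scalars <;>
          (rcases hu with rfl|rfl <;> rcases hv with rfl|rfl <;>
            rcases hs with rfl|rfl <;> rcases ht with rfl|rfl <;> norm_num)
      · rcases hu with rfl|rfl <;> rcases hv with rfl|rfl <;>
          rcases hs with rfl|rfl <;> rcases ht with rfl|rfl <;> decide
    · -- only p = i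
      refine ⟨u*s, ?_, ?_,
        fun hl2 => absurd hl2 (three_distinct_ne_two hqi hpj hqj)⟩
      · simp [hpj, Ne.symm hpj, hqi, Ne.symm hqi, hqj, Ne.symm hqj]
        push_cast
        rcases hu with rfl|rfl <;> rcases hs with rfl|rfl <;>
          rcases ht with rfl|rfl <;> norm_num
      · rw [mem_BCm_iff]
        refine ⟨q, j, hqj, v, -(u*(s*t)), hv, (hu.mul (hs.mul ht)).neg, ?_⟩
        push_cast
        match_scalars <;>
          (rcases hu with rfl|rfl <;> rcases hv with rfl|rfl <;>
            rcases hs with rfl|rfl <;> rcases ht with rfl|rfl <;> norm_num)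
  · rcases eq_or_ne p j with rfl | hpj
    · -- j = p
      have hip : i ≠ p := hij
      have hqj : q ≠ p := Ne.symm hpq
      rcases eq_or_ne q i with rfl | hqi
      · -- (i,j) = (q,p)
        refine ⟨u*t + v*s, ?_, ?_, fun _ => ?_⟩
        · simp [hpi, hqj]
          push_cast
          rcases hu with rfl|rfl <;> rcases hv with rfl|rfl <;>
            rcases hs with rfl|rfl <;> rcases ht with rfl|rfl <;> norm_num
        · rw [mem_BCm_iff]
          refine ⟨q, p, hpq.symm, -(u*(t*s)), -(v*(s*t)), (hu.mul (ht.mul hs)).neg,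
            (hv.mul (hs.mul ht)).neg, ?_⟩
          push_cast
          match_scalars <;>
            (rcases hu with rfl|rfl <;> rcases hv with rfl|rfl <;>
              rcases hs with rfl|rfl <;> rcases ht with rfl|rfl <;> norm_num)
        · rcases hu with rfl|rfl <;> rcases hv with rfl|rfl <;>
            rcases hs with rfl|rfl <;> rcases ht with rfl|rfl <;> decide
      · -- only p = j
        refine ⟨u*t, ?_, ?_,
          fun hl2 => absurd hl2 (three_distinct_ne_two hqj hip.symm hqi)⟩
        · simp [hpi, hip, hqi, Ne.symm hqi, hqj, Ne.symm hqj]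
          push_cast
          rcases hu with rfl|rfl <;> rcases hs with rfl|rfl <;>
            rcases ht with rfl|rfl <;> norm_num
        · rw [mem_BCm_iff]
          refine ⟨q, i, hqi, v, -(u*(t*s)), hv, (hu.mul (ht.mul hs)).neg, ?_⟩
          push_cast
          match_scalars <;>
            (rcases hu with rfl|rfl <;> rcases hv with rfl|rfl <;>
              rcases hs with rfl|rfl <;> rcases ht with rfl|rfl <;> norm_num)
    · rcases eq_or_ne q i with rfl | hqi
      · -- only q = i
        have hqj : q ≠ j := hij
        refine ⟨v*s, ?_, ?_,
          fun hl2 => absurd hl2 (three_distinct_ne_two hpq hqj hpj)⟩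
        · simp [hpi, Ne.symm hpi, hpj, Ne.symm hpj, hqj, Ne.symm hqj]
          push_cast
          rcases hv with rfl|rfl <;> rcases hs with rfl|rfl <;>
            rcases ht with rfl|rfl <;> norm_num
        · rw [mem_BCm_iff]
          refine ⟨p, j, hpj, u, -(v*(s*t)), hu, (hv.mul (hs.mul ht)).neg, ?_⟩
          push_cast
          match_scalars <;>
            (rcases hu with rfl|rfl <;> rcases hv with rfl|rfl <;>
              rcases hs with rfl|rfl <;> rcases ht with rfl|rfl <;> norm_num)
      · rcases eq_or_ne q j with rfl | hqj
        · -- only q = j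
          refine ⟨v*t, ?_, ?_,
            fun hl2 => absurd hl2 (three_distinct_ne_two hpq hqi hpi)⟩
          · simp [hpi, Ne.symm hpi, hpj, Ne.symm hpj, hqi, Ne.symm hqi]
            push_cast
            rcases hv with rfl|rfl <;> rcases hs with rfl|rfl <;>
              rcases ht with rfl|rfl <;> norm_num
          · rw [mem_BCm_iff]
            refine ⟨p, i, hpi, u, -(v*(t*s)), hu, (hv.mul (ht.mul hs)).neg, ?_⟩
            push_cast
            match_scalars <;>
              (rcases hu with rfl|rfl <;> rcases hv with rfl|rfl <;>
                rcases hs with rfl|rfl <;> rcases ht with rfl|rfl <;> norm_num)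
        · refine ⟨0, ?_, ?_, fun _ => ⟨0, rfl⟩⟩
          · simp [hpi, Ne.symm hpi, hpj, Ne.symm hpj, hqi, Ne.symm hqi, hqj, Ne.symm hqj]
          · rw [mem_BCm_iff]
            exact ⟨p, q, hpq, u, v, hu, hv, by push_cast; module⟩

lemma refl_ML {g f : V l} (hg : g ∈ BCm l) (hf : f ∈ BCl l) :
    ∃ k : ℤ, 2 * Iform l g f = (k:ℝ) * Iform l f f ∧ g - (k:ℝ) • f ∈ BCm l := by
  rw [mem_BCm_iff] at hg
  rw [mem_BCl_iff] at hf
  obtain ⟨p, q, hpq, u, v, hu, hv, rfl⟩ := hg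
  obtain ⟨i, s, hs, rfl⟩ := hf
  rcases eq_or_ne p i with rfl | hpi
  · refine ⟨u*s, ?_, ?_⟩
    · simp [Ne.symm hpq]
      push_cast
      rcases hu with rfl|rfl <;> rcases hs with rfl|rfl <;> norm_num
    · rw [mem_BCm_iff]
      refine ⟨p, q, hpq, -u, v, hu.neg, hv, ?_⟩
      push_cast
      match_scalars <;>
        (rcases hu with rfl|rfl <;> rcases hs with rfl|rfl <;> norm_num)
  · rcases eq_or_ne q i with rfl | hqi
    · refine ⟨v*s, ?_, ?_⟩
      · simp [hpi]
        push_cast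
        rcases hv with rfl|rfl <;> rcases hs with rfl|rfl <;> norm_num
      · rw [mem_BCm_iff]
        refine ⟨p, q, hpq, u, -v, hu, hv.neg, ?_⟩
        push_cast
        match_scalars <;>
          (rcases hv with rfl|rfl <;> rcases hs with rfl|rfl <;> norm_num)
    · refine ⟨0, ?_, ?_⟩
      · simp [hpi, hqi]
      · rw [mem_BCm_iff]
        exact ⟨p, q, hpq, u, v, hu, hv, by push_cast; module⟩

lemma refl_LS {g f : V l} (hg : g ∈ BCl l) (hf : f ∈ BCs l) :
    ∃ k : ℤ, 2 * Iform l g f = (k:ℝ) * Iform l f f ∧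
      g - (k:ℝ) • f ∈ BCl l ∧ 4 ∣ k := by
  rw [mem_BCl_iff] at hg
  rw [mem_BCs_iff] at hf
  obtain ⟨p, u, hu, rfl⟩ := hg
  obtain ⟨i, s, hs, rfl⟩ := hf
  rcases eq_or_ne p i with rfl | hpi
  · refine ⟨4*(u*s), ?_, ?_, ⟨u*s, rfl⟩⟩
    · simp only [Iform_smul_left, Iform_smul_right, Iform_εv]
      push_cast [if_pos rfl]
      rcases hu with rfl|rfl <;> rcases hs with rfl|rfl <;> norm_num
    · rw [mem_BCl_iff]
      refine ⟨p, -u, hu.neg, ?_⟩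
      push_cast
      match_scalars
      rcases hu with rfl|rfl <;> rcases hs with rfl|rfl <;> norm_num
  · refine ⟨0, ?_, ?_, ⟨0, rfl⟩⟩
    · simp [hpi]
    · rw [mem_BCl_iff]
      exact ⟨p, u, hu, by push_cast; module⟩

lemma refl_LM {g f : V l} (hg : g ∈ BCl l) (hf : f ∈ BCm l) :
    ∃ k : ℤ, 2 * Iform l g f = (k:ℝ) * Iform l f f ∧
      g - (k:ℝ) • f ∈ BCl l ∧ 2 ∣ k := by
  rw [mem_BCl_iff] at hg
  rw [mem_BCm_iff] at hf
  obtain ⟨p, u, hu, rfl⟩ := hg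
  obtain ⟨i, j, hij, s, t, hs, ht, rfl⟩ := hf
  rcases eq_or_ne p i with rfl | hpi
  · refine ⟨2*(u*s), ?_, ?_, ⟨u*s, rfl⟩⟩
    · simp [hij, Ne.symm hij]
      push_cast
      rcases hu with rfl|rfl <;> rcases hs with rfl|rfl <;>
        rcases ht with rfl|rfl <;> norm_num
    · rw [mem_BCl_iff]
      refine ⟨j, -(u*(s*t)), (hu.mul (hs.mul ht)).neg, ?_⟩
      push_cast
      match_scalars <;>
        (rcases hu with rfl|rfl <;> rcases hs with rfl|rfl <;>
          rcases ht with rfl|rfl <;> norm_num)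
  · rcases eq_or_ne p j with rfl | hpj
    · refine ⟨2*(u*t), ?_, ?_, ⟨u*t, rfl⟩⟩
      · simp [hij, Ne.symm hij, hpi]
        push_cast
        rcases hu with rfl|rfl <;> rcases hs with rfl|rfl <;>
          rcases ht with rfl|rfl <;> norm_num
      · rw [mem_BCl_iff]
        refine ⟨i, -(u*(t*s)), (hu.mul (ht.mul hs)).neg, ?_⟩
        push_cast
        match_scalars <;>
          (rcases hu with rfl|rfl <;> rcases hs with rfl|rfl <;>
            rcases ht with rfl|rfl <;> norm_num)
    · refine ⟨0, ?_, ?_, ⟨0, rfl⟩⟩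
      · simp [hij, Ne.symm hij, hpi, hpj]
      · rw [mem_BCl_iff]
        exact ⟨p, u, hu, by push_cast; module⟩

lemma refl_LL {g f : V l} (hg : g ∈ BCl l) (hf : f ∈ BCl l) :
    ∃ k : ℤ, 2 * Iform l g f = (k:ℝ) * Iform l f f ∧
      g - (k:ℝ) • f ∈ BCl l ∧ 2 ∣ k := by
  rw [mem_BCl_iff] at hg hf
  obtain ⟨p, u, hu, rfl⟩ := hg
  obtain ⟨i, s, hs, rfl⟩ := hf
  rcases eq_or_ne p i with rfl | hpi
  · refine ⟨2*(u*s), ?_, ?_, ⟨u*s, rfl⟩⟩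
    · simp only [Iform_smul_left, Iform_smul_right, Iform_εv]
      push_cast [if_pos rfl]
      rcases hu with rfl|rfl <;> rcases hs with rfl|rfl <;> norm_num
    · rw [mem_BCl_iff]
      refine ⟨p, -u, hu.neg, ?_⟩
      push_cast
      match_scalars
      rcases hu with rfl|rfl <;> rcases hs with rfl|rfl <;> norm_num
  · refine ⟨0, ?_, ?_, ⟨0, rfl⟩⟩
    · simp [hpi]
    · rw [mem_BCl_iff]
      exact ⟨p, u, hu, by push_cast; module⟩

end
end AuxRefl
noncomputable section AuxInfra
variable {l : ℕ}

lemma Iform_av_left (y : V l) : Iform l (av l) y = 0 := Iform_rad_left av_mem_Rad y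
lemma Iform_av_right (y : V l) : Iform l y (av l) = 0 := Iform_rad_right av_mem_Rad y
lemma Iform_bv_left (y : V l) : Iform l (bv l) y = 0 := Iform_rad_left bv_mem_Rad y
lemma Iform_bv_right (y : V l) : Iform l y (bv l) = 0 := Iform_rad_right bv_mem_Rad y

lemma Iform_gab (g f : V l) (a1 b1 a2 b2 : ℝ) :
    Iform l (g + a1 • av l + b1 • bv l) (f + a2 • av l + b2 • bv l)
      = Iform l g f := by
  simp [Iform_add_left, Iform_add_right, Iform_smul_left, Iform_smul_right,
    Iform_av_left, Iform_av_right, Iform_bv_left, Iform_bv_right]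

lemma reflV_eq {α x f g : V l} (hα : Iform l α α = Iform l f f)
    (hx : Iform l x α = Iform l g f) {k : ℤ}
    (hk : 2 * Iform l g f = (k:ℝ) * Iform l f f) (hN : Iform l f f ≠ 0) :
    reflV l α x = x - (k:ℝ) • α := by
  unfold reflV
  rw [hα, hx]
  have : 2 * Iform l g f / Iform l f f = (k:ℝ) := by
    rw [hk]; field_simp
  rw [this]

lemma reflV_invol {α : V l} (hN : Iform l α α ≠ 0) (x : V l) :
    reflV l α (reflV l α x) = x := by
  unfold reflV
  rw [Iform_sub_left, Iform_smul_left]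
  have key : 2 * (Iform l x α - 2 * Iform l x α / Iform l α α * Iform l α α)
      / Iform l α α = -(2 * Iform l x α / Iform l α α) := by
    field_simp
    ring
  rw [key]
  module

lemma refl_image_eq {R : Set (V l)} {α : V l} (hN : Iform l α α ≠ 0)
    (hclosed : ∀ x ∈ R, reflV l α x ∈ R) : reflV l α '' R = R := by
  apply subset_antisymm
  · rintro _ ⟨x, hx, rfl⟩
    exact hclosed x hx
  · intro x hx
    exact ⟨reflV l α x, hclosed x hx, reflV_invol hN x⟩

/-- integrality of coordinates -/
def IntVec (x : V l) : Prop := ∀ i, ∃ k : ℤ, x i = (k:ℝ)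

lemma IntVec.add {x y : V l} (hx : IntVec x) (hy : IntVec y) : IntVec (x + y) := by
  intro i
  obtain ⟨a, ha⟩ := hx i; obtain ⟨b, hb⟩ := hy i
  exact ⟨a + b, by simp [Pi.add_apply, ha, hb]⟩

lemma IntVec.zsmul {x : V l} (hx : IntVec x) (m : ℤ) : IntVec ((m:ℝ) • x) := by
  intro i
  obtain ⟨a, ha⟩ := hx i
  exact ⟨m * a, by simp [Pi.smul_apply, ha]⟩

lemma intVec_single (j : Fin (l+2)) : IntVec (Pi.single j (1:ℝ)) := by
  intro i
  rcases eq_or_ne i j with rfl | h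
  · exact ⟨1, by simp⟩
  · exact ⟨0, by simp [Pi.single_eq_of_ne h]⟩

lemma intVec_eps (i : Fin l) : IntVec (εv l i) := intVec_single _
lemma intVec_av : IntVec (av l) := intVec_single _
lemma intVec_bv : IntVec (bv l) := intVec_single _

lemma intVec_BCs {x : V l} (hx : x ∈ BCs l) : IntVec x := by
  rw [mem_BCs_iff] at hx
  obtain ⟨i, s, _, rfl⟩ := hx
  exact (intVec_eps i).zsmul s

lemma intVec_BCm {x : V l} (hx : x ∈ BCm l) : IntVec x := by
  rw [mem_BCm_iff] at hx
  obtain ⟨i, j, _, s, t, _, _, rfl⟩ := hx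
  exact ((intVec_eps i).zsmul s).add ((intVec_eps j).zsmul t)

lemma intVec_BCl {x : V l} (hx : x ∈ BCl l) : IntVec x := by
  rw [mem_BCl_iff] at hx
  obtain ⟨i, s, _, rfl⟩ := hx
  have : ((s:ℝ) • ((2:ℝ) • εv l i)) = ((s*2 : ℤ):ℝ) • εv l i := by
    push_cast; module
  rw [this]
  exact (intVec_eps i).zsmul _

lemma discrete_of_intvec {R : Set (V l)} (h : ∀ x ∈ R, IntVec x) :
    ∀ x ∈ R, ∃ ε > 0, ∀ y ∈ R, ‖x - y‖ < ε → y = x := by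
  intro x hx
  refine ⟨1/2, by norm_num, fun y hy hxy => ?_⟩
  funext i
  obtain ⟨a, ha⟩ := h x hx i
  obtain ⟨b, hb⟩ := h y hy i
  have h1 : |x i - y i| ≤ ‖x - y‖ := by
    simpa using norm_le_pi_norm (x - y) i
  have h2 : |x i - y i| < 1/2 := lt_of_le_of_lt h1 hxy
  rw [ha, hb] at h2 ⊢
  by_contra hne
  have hab : a ≠ b := fun hc => hne (by rw [hc])
  have h4 : (1:ℝ) ≤ |(a:ℝ) - (b:ℝ)| := by
    have h3 := Int.one_le_abs (sub_ne_zero.mpr hab)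
    exact_mod_cast h3
  linarith

lemma span_top_of {R : Set (V l)} (hε : ∀ i, εv l i ∈ Submodule.span ℝ R)
    (ha : av l ∈ Submodule.span ℝ R) (hb : bv l ∈ Submodule.span ℝ R) :
    Submodule.span ℝ R = ⊤ := by
  rw [eq_top_iff]
  intro x _
  have hsingle : ∀ j : Fin (l+2), Pi.single j (1:ℝ) ∈ Submodule.span ℝ R := by
    intro j
    refine Fin.addCases (motive := fun j => (Pi.single j 1 : V l) ∈ Submodule.span ℝ R)
      (fun i => hε i) (fun i => ?_) j
    match i with
    | 0 => exact ha
    | 1 => exact hb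
  have hx : x = ∑ j, x j • (Pi.single j 1 : V l) := by
    funext k
    rw [Finset.sum_apply]
    rw [Finset.sum_eq_single k]
    · simp
    · intro j _ hj
      simp [Pi.single_eq_of_ne (Ne.symm hj)]
    · simp
  rw [hx]
  exact Submodule.sum_mem _ fun j _ => Submodule.smul_mem _ _ (hsingle j)

lemma Iform_with_εv (z : V l) (k : Fin l) :
    Iform l z (εv l k) = z (Fin.castAdd 2 k) := by
  unfold Iform
  rw [Finset.sum_eq_single k]
  · rw [εv_apply, if_pos rfl, mul_one]
  · intro j _ hj
    rw [εv_apply, if_neg hj, mul_zero]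
  · simp

lemma irred_of {R : Set (V l)} (hni : ∀ α ∈ R, Iform l α α ≠ 0)
    (hε : ∀ i, εv l i ∈ R) (hm : ∀ i j : Fin l, i ≠ j → εv l i + εv l j ∈ R) :
    ∀ R1 R2 : Set (V l), R1 ∪ R2 = R →
      (∀ x ∈ R1, ∀ y ∈ R2, Iform l x y = 0) → R1 = ∅ ∨ R2 = ∅ := by
  intro R1 R2 hun horth
  by_contra hcon
  push_neg at hcon
  obtain ⟨h1, h2⟩ := hcon
  obtain ⟨x, hx⟩ := h1
  obtain ⟨y, hy⟩ := h2
  have hxR : x ∈ R := hun ▸ Set.mem_union_left _ hx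
  have hyR : y ∈ R := hun ▸ Set.mem_union_right _ hy
  have hex : ∃ i : Fin l, x (Fin.castAdd 2 i) ≠ 0 := by
    by_contra hno
    push_neg at hno
    exact hni x hxR (Finset.sum_eq_zero fun i _ => by rw [hno i, zero_mul])
  have hey : ∃ j : Fin l, y (Fin.castAdd 2 j) ≠ 0 := by
    by_contra hno
    push_neg at hno
    exact hni y hyR (Finset.sum_eq_zero fun i _ => by rw [hno i, zero_mul])
  obtain ⟨i, hi⟩ := hex
  obtain ⟨j, hj⟩ := hey
  have hεi : εv l i ∈ R1 := by
    have : εv l i ∈ R1 ∪ R2 := hun.symm ▸ hε i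
    rcases this with h | h
    · exact h
    · exact absurd (horth x hx _ h) (by rw [Iform_with_εv]; exact hi)
  have hεj : εv l j ∈ R2 := by
    have : εv l j ∈ R1 ∪ R2 := hun.symm ▸ hε j
    rcases this with h | h
    · exact absurd (horth _ h y hy) (by rw [Iform_symm, Iform_with_εv]; exact hj)
    · exact h
  rcases eq_or_ne i j with rfl | hij
  · have := horth _ hεi _ hεj
    rw [Iform_εv, if_pos rfl] at this
    norm_num at this
  · have hz : εv l i + εv l j ∈ R1 ∪ R2 := hun.symm ▸ hm i j hij
    rcases hz with h | h
    · have := horth _ h _ hεj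
      rw [Iform_add_left, Iform_εv, Iform_εv, if_neg hij, if_pos rfl] at this
      norm_num at this
    · have := horth _ hεi _ h
      rw [Iform_add_right, Iform_εv, Iform_εv, if_pos rfl, if_neg hij] at this
      norm_num at this

lemma av_ne_zero : av l ≠ 0 := by
  intro h
  have := congrFun h (Fin.natAdd l (0 : Fin 2))
  simp [av, Pi.single_eq_same] at this

lemma Ga_le_radSpan : Ga l ≤ radSpan l :=
  Submodule.span_mono (by simp [Set.singleton_subset_iff])

lemma finrank_Ga : Module.finrank ℝ (Ga l) = 1 :=
  finrank_span_singleton av_ne_zero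

lemma marking_of {R : Set (V l)} {x : V l} (h1 : x ∈ R) (h2 : x + av l ∈ R) :
    IsMarking l R (Ga l) := by
  refine ⟨Ga_le_radSpan, finrank_Ga, av l, av_ne_zero,
    Submodule.subset_span rfl, ?_⟩
  have : av l = (x + av l) - x := by module
  rw [this]
  exact sub_mem (AddSubgroup.subset_closure h2) (AddSubgroup.subset_closure h1)

lemma mkQ_image_eq {R S : Set (V l)}
    (h1 : ∀ x ∈ R, ∃ y ∈ S, x - y ∈ Ga l) (h2 : ∀ y ∈ S, ∃ x ∈ R, x - y ∈ Ga l) :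
    (Ga l).mkQ '' R = (Ga l).mkQ '' S := by
  apply subset_antisymm
  · rintro _ ⟨x, hx, rfl⟩
    obtain ⟨y, hy, hxy⟩ := h1 x hx
    refine ⟨y, hy, ?_⟩
    rw [Submodule.mkQ_apply, Submodule.mkQ_apply, Submodule.Quotient.eq]
    have := neg_mem hxy
    rwa [neg_sub] at this
  · rintro _ ⟨y, hy, rfl⟩
    obtain ⟨x, hx, hxy⟩ := h2 y hy
    refine ⟨x, hx, ?_⟩
    rw [Submodule.mkQ_apply, Submodule.mkQ_apply, Submodule.Quotient.eq]
    exact hxy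

lemma smul_av_mem_Ga (m : ℤ) : (m:ℝ) • av l ∈ Ga l :=
  Submodule.smul_mem _ _ (Submodule.subset_span rfl)

end AuxInfra
noncomputable section AuxMem
variable {l : ℕ}

lemma mem_SZb {S : Set (V l)} {k : ℤ} {x : V l} :
    x ∈ S + Zb l k ↔ ∃ g ∈ S, ∃ n : ℤ, x = g + ((k*n : ℤ):ℝ) • bv l := by
  simp only [Set.mem_add]
  constructor
  · rintro ⟨g, hg, z, ⟨n, rfl⟩, rfl⟩
    exact ⟨g, hg, n, rfl⟩
  · rintro ⟨g, hg, n, rfl⟩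
    exact ⟨g, hg, _, ⟨n, rfl⟩, rfl⟩

lemma mem_SZbZa {S : Set (V l)} {k : ℤ} {x : V l} :
    x ∈ (S + Zb l k) + Za l 1 ↔
      ∃ g ∈ S, ∃ m n : ℤ, x = g + (m:ℝ) • av l + ((k*n : ℤ):ℝ) • bv l := by
  simp only [Set.mem_add]
  constructor
  · rintro ⟨y, ⟨g, hg, z, ⟨nb, rfl⟩, rfl⟩, w, ⟨ma, rfl⟩, rfl⟩
    exact ⟨g, hg, ma, nb, by push_cast; module⟩
  · rintro ⟨g, hg, m, n, rfl⟩
    exact ⟨g + ((k*n : ℤ):ℝ) • bv l, ⟨g, hg, _, ⟨n, rfl⟩, rfl⟩,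
      ((1*m : ℤ):ℝ) • av l, ⟨m, rfl⟩, by push_cast; module⟩

lemma mem_SZaZb {S : Set (V l)} {k k' : ℤ} {x : V l} :
    x ∈ (S + Za l k) + Zb l k' ↔
      ∃ g ∈ S, ∃ m n : ℤ, x = g + ((k*m : ℤ):ℝ) • av l + ((k'*n : ℤ):ℝ) • bv l := by
  simp only [Set.mem_add]
  constructor
  · rintro ⟨y, ⟨g, hg, z, ⟨ma, rfl⟩, rfl⟩, w, ⟨nb, rfl⟩, rfl⟩
    exact ⟨g, hg, ma, nb, rfl⟩
  · rintro ⟨g, hg, m, n, rfl⟩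
    exact ⟨g + ((k*m : ℤ):ℝ) • av l, ⟨g, hg, _, ⟨m, rfl⟩, rfl⟩,
      ((k'*n : ℤ):ℝ) • bv l, ⟨n, rfl⟩, rfl⟩

lemma mem_SdiaL {S : Set (V l)} {x : V l} :
    x ∈ S + diaL l ↔
      ∃ g ∈ S, ∃ m n : ℤ, (2:ℤ) ∣ (m - n) ∧
        x = g + (m:ℝ) • av l + ((2*n : ℤ):ℝ) • bv l := by
  simp only [Set.mem_add]
  constructor
  · rintro ⟨g, hg, z, ⟨m, n, hmn, rfl⟩, rfl⟩
    exact ⟨g, hg, m, n, hmn, by push_cast; module⟩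
  · rintro ⟨g, hg, m, n, hmn, rfl⟩
    exact ⟨g, hg, (m:ℝ) • av l + ((2*n : ℤ):ℝ) • bv l, ⟨m, n, hmn, rfl⟩,
      by push_cast; module⟩

lemma mem_SL00 {S : Set (V l)} {x : V l} :
    x ∈ S + Lset l 0 0 1 1 ↔
      ∃ g ∈ S, ∃ m n : ℤ, (2:ℤ) ∣ (m * n) ∧
        x = g + (m:ℝ) • av l + (n:ℝ) • bv l := by
  simp only [Set.mem_add]
  constructor
  · rintro ⟨g, hg, z, ⟨m, n, hmn, rfl⟩, rfl⟩
    refine ⟨g, hg, m, n, by simpa using hmn, by push_cast; module⟩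
  · rintro ⟨g, hg, m, n, hmn, rfl⟩
    exact ⟨g, hg, ((1*m : ℤ):ℝ) • av l + ((1*n : ℤ):ℝ) • bv l,
      ⟨m, n, by simpa using hmn, rfl⟩, by push_cast; module⟩

lemma mem_CvC2dia_iff {x : V l} : x ∈ CvC2dia l ↔
    (∃ g ∈ BCs l, ∃ m n : ℤ, x = g + (m:ℝ) • av l + (n:ℝ) • bv l) ∨
    (∃ g ∈ BCm l, ∃ m n : ℤ, x = g + (m:ℝ) • av l + ((2*n : ℤ):ℝ) • bv l) ∨
    (∃ g ∈ BCl l, ∃ m n : ℤ, (2:ℤ) ∣ (m - n) ∧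
        x = g + (m:ℝ) • av l + ((2*n : ℤ):ℝ) • bv l) := by
  unfold CvC2dia AffS AffM
  rw [Set.mem_union, Set.mem_union, mem_SZbZa, mem_SZbZa, mem_SdiaL]
  have htfm : tfm AffType.CvC = 2 := rfl
  rw [htfm]
  constructor
  · rintro ((⟨g, hg, m, n, rfl⟩ | ⟨g, hg, m, n, rfl⟩) | h)
    · exact Or.inl ⟨g, hg, m, n, by push_cast; module⟩
    · exact Or.inr (Or.inl ⟨g, hg, m, n, rfl⟩)
    · exact Or.inr (Or.inr h)
  · rintro (⟨g, hg, m, n, rfl⟩ | ⟨g, hg, m, n, rfl⟩ | h)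
    · exact Or.inl (Or.inl ⟨g, hg, m, n, by push_cast; module⟩)
    · exact Or.inl (Or.inr ⟨g, hg, m, n, rfl⟩)
    · exact Or.inr h

lemma mem_BB2star_iff {x : V l} : x ∈ BB2star l ↔
    (∃ g ∈ BCs l, ∃ m n : ℤ, x = g + (m:ℝ) • av l + (n:ℝ) • bv l) ∨
    (∃ g ∈ BCm l, ∃ m n : ℤ, (2:ℤ) ∣ (m * n) ∧
        x = g + (m:ℝ) • av l + (n:ℝ) • bv l) ∨
    (∃ g ∈ BCl l, ∃ m n : ℤ,
        x = g + ((2*m : ℤ):ℝ) • av l + ((2*n : ℤ):ℝ) • bv l) := by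
  unfold BB2star
  rw [Set.mem_union, Set.mem_union, mem_SZaZb, mem_SL00, mem_SZaZb]
  constructor
  · rintro ((⟨g, hg, m, n, rfl⟩ | h) | ⟨g, hg, m, n, rfl⟩)
    · exact Or.inl ⟨g, hg, m, n, by push_cast; module⟩
    · exact Or.inr (Or.inl h)
    · exact Or.inr (Or.inr ⟨g, hg, m, n, rfl⟩)
  · rintro (⟨g, hg, m, n, rfl⟩ | h | ⟨g, hg, m, n, rfl⟩)
    · exact Or.inl (Or.inl ⟨g, hg, m, n, by push_cast; module⟩)
    · exact Or.inl (Or.inr h)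
    · exact Or.inr ⟨g, hg, m, n, rfl⟩

lemma mem_Aff_CvC_iff {x : V l} : x ∈ Aff l .CvC ↔
    (∃ g ∈ BCs l, ∃ n : ℤ, x = g + (n:ℝ) • bv l) ∨
    (∃ g ∈ BCm l, ∃ n : ℤ, x = g + ((2*n : ℤ):ℝ) • bv l) ∨
    (∃ g ∈ BCl l, ∃ n : ℤ, x = g + ((2*n : ℤ):ℝ) • bv l) := by
  unfold Aff AffS AffM AffL
  rw [Set.mem_union, Set.mem_union, mem_SZb, mem_SZb, mem_SZb]
  have h1 : tfm AffType.CvC = 2 := rfl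
  have h2 : tfl AffType.CvC = 2 := rfl
  rw [h1, h2]
  constructor
  · rintro ((⟨g, hg, n, rfl⟩ | h) | h)
    · exact Or.inl ⟨g, hg, n, by push_cast; module⟩
    · exact Or.inr (Or.inl h)
    · exact Or.inr (Or.inr h)
  · rintro (⟨g, hg, n, rfl⟩ | h | h)
    · exact Or.inl (Or.inl ⟨g, hg, n, by push_cast; module⟩)
    · exact Or.inl (Or.inr h)
    · exact Or.inr h

lemma mem_Aff_BBv_iff {x : V l} : x ∈ Aff l .BBv ↔
    (∃ g ∈ BCs l, ∃ n : ℤ, x = g + (n:ℝ) • bv l) ∨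
    (∃ g ∈ BCm l, ∃ n : ℤ, x = g + (n:ℝ) • bv l) ∨
    (∃ g ∈ BCl l, ∃ n : ℤ, x = g + ((2*n : ℤ):ℝ) • bv l) := by
  unfold Aff AffS AffM AffL
  rw [Set.mem_union, Set.mem_union, mem_SZb, mem_SZb, mem_SZb]
  have h1 : tfm AffType.BBv = 1 := rfl
  have h2 : tfl AffType.BBv = 2 := rfl
  rw [h1, h2]
  constructor
  · rintro ((⟨g, hg, n, rfl⟩ | ⟨g, hg, n, rfl⟩) | h)
    · exact Or.inl ⟨g, hg, n, by push_cast; module⟩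
    · exact Or.inr (Or.inl ⟨g, hg, n, by push_cast; module⟩)
    · exact Or.inr (Or.inr h)
  · rintro (⟨g, hg, n, rfl⟩ | ⟨g, hg, n, rfl⟩ | h)
    · exact Or.inl (Or.inl ⟨g, hg, n, by push_cast; module⟩)
    · exact Or.inl (Or.inr ⟨g, hg, n, by push_cast; module⟩)
    · exact Or.inr h

end AuxMem
noncomputable section AuxCvC
variable {l : ℕ}

lemma eps_mem_BCs (i : Fin l) : εv l i ∈ BCs l :=
  mem_BCs_iff.mpr ⟨i, 1, Sgn.one, by simp⟩

lemma two_eps_mem_BCl (i : Fin l) : (2:ℝ) • εv l i ∈ BCl l :=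
  mem_BCl_iff.mpr ⟨i, 1, Sgn.one, by simp⟩

lemma mid_mem_BCm {i j : Fin l} (hij : i ≠ j) : εv l i + εv l j ∈ BCm l :=
  mem_BCm_iff.mpr ⟨i, j, hij, 1, 1, Sgn.one, Sgn.one, by simp⟩

lemma CvC2dia_S_mem (i : Fin l) (m n : ℤ) :
    εv l i + (m:ℝ) • av l + (n:ℝ) • bv l ∈ CvC2dia l :=
  mem_CvC2dia_iff.mpr (Or.inl ⟨εv l i, eps_mem_BCs i, m, n, rfl⟩)

lemma eps_mem_CvC2dia (i : Fin l) : εv l i ∈ CvC2dia l := by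
  have := CvC2dia_S_mem i 0 0
  simpa using this

lemma CvC2dia_nonisotropic : ∀ α ∈ CvC2dia l, Iform l α α ≠ 0 := by
  intro α hα
  rcases mem_CvC2dia_iff.mp hα with ⟨g, hg, m, n, rfl⟩ | ⟨g, hg, m, n, rfl⟩ |
    ⟨g, hg, m, n, _, rfl⟩
  · rw [Iform_gab, Iform_BCs_self hg]; norm_num
  · rw [Iform_gab, Iform_BCm_self hg]; norm_num
  · rw [Iform_gab, Iform_BCl_self hg]; norm_num

lemma CvC2dia_intvec : ∀ x ∈ CvC2dia l, IntVec x := by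
  intro x hx
  rcases mem_CvC2dia_iff.mp hx with ⟨g, hg, m, n, rfl⟩ | ⟨g, hg, m, n, rfl⟩ |
    ⟨g, hg, m, n, _, rfl⟩
  · exact ((intVec_BCs hg).add (intVec_av.zsmul m)).add (intVec_bv.zsmul n)
  · exact ((intVec_BCm hg).add (intVec_av.zsmul m)).add (intVec_bv.zsmul _)
  · exact ((intVec_BCl hg).add (intVec_av.zsmul m)).add (intVec_bv.zsmul _)

lemma integral_glue {α β fα fβ : V l} (a1 b1 a2 b2 : ℝ)
    (hα : α = fα + a1 • av l + b1 • bv l) (hβ : β = fβ + a2 • av l + b2 • bv l)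
    {k : ℤ} (hk : 2 * Iform l fβ fα = (k:ℝ) * Iform l fα fα) :
    ∃ n : ℤ, 2 * Iform l α β = (n:ℝ) * Iform l α α :=
  ⟨k, by rw [hα, hβ, Iform_gab, Iform_gab, Iform_symm fα fβ, hk]⟩

/-- generic integrality from the finite reflection lemmas -/
lemma integral_of_decomp {R : Set (V l)}
    (hdec : ∀ x ∈ R, ∃ g, (g ∈ BCs l ∨ g ∈ BCm l ∨ g ∈ BCl l) ∧
      ∃ a b : ℝ, x = g + a • av l + b • bv l) :
    ∀ α ∈ R, ∀ β ∈ R, ∃ n : ℤ, 2 * Iform l α β = (n:ℝ) * Iform l α α := by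
  intro α hα β hβ
  obtain ⟨fα, hfα, a1, b1, h1⟩ := hdec α hα
  obtain ⟨fβ, hfβ, a2, b2, h2⟩ := hdec β hβ
  rcases hfβ with hfβ | hfβ | hfβ <;> rcases hfα with hfα | hfα | hfα
  · obtain ⟨k, hk, -⟩ := refl_SS hfβ hfα
    exact integral_glue a1 b1 a2 b2 h1 h2 hk
  · obtain ⟨k, hk, -⟩ := refl_SM hfβ hfα
    exact integral_glue a1 b1 a2 b2 h1 h2 hk
  · obtain ⟨k, hk, -⟩ := refl_SL hfβ hfα
    exact integral_glue a1 b1 a2 b2 h1 h2 hk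
  · obtain ⟨k, hk, -, -⟩ := refl_MS hfβ hfα
    exact integral_glue a1 b1 a2 b2 h1 h2 hk
  · obtain ⟨k, hk, -, -⟩ := refl_MM hfβ hfα
    exact integral_glue a1 b1 a2 b2 h1 h2 hk
  · obtain ⟨k, hk, -⟩ := refl_ML hfβ hfα
    exact integral_glue a1 b1 a2 b2 h1 h2 hk
  · obtain ⟨k, hk, -, -⟩ := refl_LS hfβ hfα
    exact integral_glue a1 b1 a2 b2 h1 h2 hk
  · obtain ⟨k, hk, -, -⟩ := refl_LM hfβ hfα
    exact integral_glue a1 b1 a2 b2 h1 h2 hk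
  · obtain ⟨k, hk, -, -⟩ := refl_LL hfβ hfα
    exact integral_glue a1 b1 a2 b2 h1 h2 hk

lemma CvC2dia_decomp : ∀ x ∈ CvC2dia l, ∃ g, (g ∈ BCs l ∨ g ∈ BCm l ∨ g ∈ BCl l) ∧
    ∃ a b : ℝ, x = g + a • av l + b • bv l := by
  intro x hx
  rcases mem_CvC2dia_iff.mp hx with ⟨g, hg, m, n, rfl⟩ | ⟨g, hg, m, n, rfl⟩ |
    ⟨g, hg, m, n, _, rfl⟩
  · exact ⟨g, Or.inl hg, _, _, rfl⟩
  · exact ⟨g, Or.inr (Or.inl hg), _, _, rfl⟩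
  · exact ⟨g, Or.inr (Or.inr hg), _, _, rfl⟩

lemma NS_ne {f : V l} (hf : f ∈ BCs l) : Iform l f f ≠ 0 := by
  rw [Iform_BCs_self hf]; norm_num
lemma NM_ne {f : V l} (hf : f ∈ BCm l) : Iform l f f ≠ 0 := by
  rw [Iform_BCm_self hf]; norm_num
lemma NL_ne {f : V l} (hf : f ∈ BCl l) : Iform l f f ≠ 0 := by
  rw [Iform_BCl_self hf]; norm_num

lemma CvC2dia_reflects :
    ∀ α ∈ CvC2dia l, reflV l α '' CvC2dia l = CvC2dia l := by
  intro α hα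
  have hN : Iform l α α ≠ 0 := CvC2dia_nonisotropic α hα
  apply refl_image_eq hN
  intro x hx
  rcases mem_CvC2dia_iff.mp hα with ⟨f, hf, m2, n2, hαe⟩ | ⟨f, hf, m2, n2, hαe⟩ |
    ⟨f, hf, m2, n2, hd2, hαe⟩ <;>
  rcases mem_CvC2dia_iff.mp hx with ⟨g, hg, m, n, hxe⟩ | ⟨g, hg, m, n, hxe⟩ |
    ⟨g, hg, m, n, hd, hxe⟩ <;> subst hαe hxe
  -- α short
  · obtain ⟨k, hk, hmem⟩ := refl_SS hg hf
    rw [reflV_eq (Iform_gab f f _ _ _ _) (Iform_gab g f _ _ _ _) hk (NS_ne hf)]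
    exact mem_CvC2dia_iff.mpr (Or.inl ⟨g - (k:ℝ) • f, hmem, m - k*m2, n - k*n2,
      by push_cast; module⟩)
  · obtain ⟨k, hk, hmem, hdvd⟩ := refl_MS hg hf
    obtain ⟨c, rfl⟩ := hdvd
    rw [reflV_eq (Iform_gab f f _ _ _ _) (Iform_gab g f _ _ _ _) hk (NS_ne hf)]
    exact mem_CvC2dia_iff.mpr (Or.inr (Or.inl ⟨g - ((2*c : ℤ):ℝ) • f, hmem,
      m - 2*c*m2, n - c*n2, by push_cast; module⟩))
  · obtain ⟨k, hk, hmem, hdvd⟩ := refl_LS hg hf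
    obtain ⟨c, rfl⟩ := hdvd
    rw [reflV_eq (Iform_gab f f _ _ _ _) (Iform_gab g f _ _ _ _) hk (NS_ne hf)]
    refine mem_CvC2dia_iff.mpr (Or.inr (Or.inr ⟨g - ((4*c : ℤ):ℝ) • f, hmem,
      m - 4*c*m2, n - 2*c*n2, ?_, by push_cast; module⟩))
    obtain ⟨d, hd'⟩ := hd
    exact ⟨d - 2*c*m2 + c*n2, by linear_combination hd'⟩
  -- α middle
  · obtain ⟨k, hk, hmem⟩ := refl_SM hg hf
    rw [reflV_eq (Iform_gab f f _ _ _ _) (Iform_gab g f _ _ _ _) hk (NM_ne hf)]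
    exact mem_CvC2dia_iff.mpr (Or.inl ⟨g - (k:ℝ) • f, hmem, m - k*m2, n - 2*k*n2,
      by push_cast; module⟩)
  · obtain ⟨k, hk, hmem, -⟩ := refl_MM hg hf
    rw [reflV_eq (Iform_gab f f _ _ _ _) (Iform_gab g f _ _ _ _) hk (NM_ne hf)]
    exact mem_CvC2dia_iff.mpr (Or.inr (Or.inl ⟨g - (k:ℝ) • f, hmem,
      m - k*m2, n - k*n2, by push_cast; module⟩))
  · obtain ⟨k, hk, hmem, hdvd⟩ := refl_LM hg hf
    obtain ⟨c, rfl⟩ := hdvd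
    rw [reflV_eq (Iform_gab f f _ _ _ _) (Iform_gab g f _ _ _ _) hk (NM_ne hf)]
    refine mem_CvC2dia_iff.mpr (Or.inr (Or.inr ⟨g - ((2*c : ℤ):ℝ) • f, hmem,
      m - 2*c*m2, n - 2*c*n2, ?_, by push_cast; module⟩))
    obtain ⟨d, hd'⟩ := hd
    exact ⟨d - c*m2 + c*n2, by linear_combination hd'⟩
  -- α long
  · obtain ⟨k, hk, hmem⟩ := refl_SL hg hf
    rw [reflV_eq (Iform_gab f f _ _ _ _) (Iform_gab g f _ _ _ _) hk (NL_ne hf)]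
    exact mem_CvC2dia_iff.mpr (Or.inl ⟨g - (k:ℝ) • f, hmem, m - k*m2, n - 2*k*n2,
      by push_cast; module⟩)
  · obtain ⟨k, hk, hmem⟩ := refl_ML hg hf
    rw [reflV_eq (Iform_gab f f _ _ _ _) (Iform_gab g f _ _ _ _) hk (NL_ne hf)]
    exact mem_CvC2dia_iff.mpr (Or.inr (Or.inl ⟨g - (k:ℝ) • f, hmem,
      m - k*m2, n - k*n2, by push_cast; module⟩))
  · obtain ⟨k, hk, hmem, hdvd⟩ := refl_LL hg hf
    obtain ⟨c, rfl⟩ := hdvd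
    rw [reflV_eq (Iform_gab f f _ _ _ _) (Iform_gab g f _ _ _ _) hk (NL_ne hf)]
    refine mem_CvC2dia_iff.mpr (Or.inr (Or.inr ⟨g - ((2*c : ℤ):ℝ) • f, hmem,
      m - 2*c*m2, n - 2*c*n2, ?_, by push_cast; module⟩))
    obtain ⟨d, hd'⟩ := hd
    exact ⟨d - c*m2 + c*n2, by linear_combination hd'⟩

lemma CvC2dia_isERS (hl : 1 ≤ l) : IsERS l (CvC2dia l) := by
  refine ⟨discrete_of_intvec CvC2dia_intvec, ?_, CvC2dia_nonisotropic,
    integral_of_decomp CvC2dia_decomp, CvC2dia_reflects,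
    irred_of CvC2dia_nonisotropic eps_mem_CvC2dia
      (fun i j hij => mem_CvC2dia_iff.mpr
        (Or.inr (Or.inl ⟨εv l i + εv l j, mid_mem_BCm hij, 0, 0, by push_cast; module⟩)))⟩
  apply span_top_of
  · exact fun i => Submodule.subset_span (eps_mem_CvC2dia i)
  · have i0 : Fin l := ⟨0, hl⟩
    have h1 : εv l ⟨0, hl⟩ + av l ∈ CvC2dia l := by
      have := CvC2dia_S_mem ⟨0, hl⟩ 1 0
      simpa using this
    have : av l = (εv l ⟨0, hl⟩ + av l) - εv l ⟨0, hl⟩ := by module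
    rw [this]
    exact sub_mem (Submodule.subset_span h1)
      (Submodule.subset_span (eps_mem_CvC2dia ⟨0, hl⟩))
  · have h1 : εv l ⟨0, hl⟩ + bv l ∈ CvC2dia l := by
      have := CvC2dia_S_mem ⟨0, hl⟩ 0 1
      simpa using this
    have : bv l = (εv l ⟨0, hl⟩ + bv l) - εv l ⟨0, hl⟩ := by module
    rw [this]
    exact sub_mem (Submodule.subset_span h1)
      (Submodule.subset_span (eps_mem_CvC2dia ⟨0, hl⟩))

lemma CvC2dia_nonreduced (hl : 1 ≤ l) : IsNonReducedRS l (CvC2dia l) := by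
  refine ⟨εv l ⟨0, hl⟩, eps_mem_CvC2dia _, ?_⟩
  exact mem_CvC2dia_iff.mpr (Or.inr (Or.inr ⟨(2:ℝ) • εv l ⟨0, hl⟩,
    two_eps_mem_BCl _, 0, 0, by omega, by push_cast; module⟩))

lemma CvC2dia_marking (hl : 1 ≤ l) : IsMarking l (CvC2dia l) (Ga l) := by
  apply marking_of (eps_mem_CvC2dia ⟨0, hl⟩)
  have := CvC2dia_S_mem ⟨0, hl⟩ 1 0
  simpa using this

lemma CvC2dia_quot : (Ga l).mkQ '' CvC2dia l = (Ga l).mkQ '' Aff l .CvC := by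
  apply mkQ_image_eq
  · intro x hx
    rcases mem_CvC2dia_iff.mp hx with ⟨g, hg, m, n, rfl⟩ | ⟨g, hg, m, n, rfl⟩ |
      ⟨g, hg, m, n, _, rfl⟩
    · refine ⟨g + (n:ℝ) • bv l, mem_Aff_CvC_iff.mpr (Or.inl ⟨g, hg, n, rfl⟩), ?_⟩
      have h : (g + (m:ℝ) • av l + (n:ℝ) • bv l) - (g + (n:ℝ) • bv l)
          = (m:ℝ) • av l := by module
      rw [h]; exact smul_av_mem_Ga m
    · refine ⟨g + ((2*n : ℤ):ℝ) • bv l,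
        mem_Aff_CvC_iff.mpr (Or.inr (Or.inl ⟨g, hg, n, rfl⟩)), ?_⟩
      have h : (g + (m:ℝ) • av l + ((2*n : ℤ):ℝ) • bv l) - (g + ((2*n : ℤ):ℝ) • bv l)
          = (m:ℝ) • av l := by module
      rw [h]; exact smul_av_mem_Ga m
    · refine ⟨g + ((2*n : ℤ):ℝ) • bv l,
        mem_Aff_CvC_iff.mpr (Or.inr (Or.inr ⟨g, hg, n, rfl⟩)), ?_⟩
      have h : (g + (m:ℝ) • av l + ((2*n : ℤ):ℝ) • bv l) - (g + ((2*n : ℤ):ℝ) • bv l)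
          = (m:ℝ) • av l := by module
      rw [h]; exact smul_av_mem_Ga m
  · intro y hy
    rcases mem_Aff_CvC_iff.mp hy with ⟨g, hg, n, rfl⟩ | ⟨g, hg, n, rfl⟩ |
      ⟨g, hg, n, rfl⟩
    · refine ⟨g + ((0:ℤ):ℝ) • av l + (n:ℝ) • bv l,
        mem_CvC2dia_iff.mpr (Or.inl ⟨g, hg, 0, n, rfl⟩), ?_⟩
      have h : (g + ((0:ℤ):ℝ) • av l + (n:ℝ) • bv l) - (g + (n:ℝ) • bv l)
          = ((0:ℤ):ℝ) • av l := by module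
      rw [h]; exact smul_av_mem_Ga 0
    · refine ⟨g + ((0:ℤ):ℝ) • av l + ((2*n : ℤ):ℝ) • bv l,
        mem_CvC2dia_iff.mpr (Or.inr (Or.inl ⟨g, hg, 0, n, rfl⟩)), ?_⟩
      have h : (g + ((0:ℤ):ℝ) • av l + ((2*n : ℤ):ℝ) • bv l)
          - (g + ((2*n : ℤ):ℝ) • bv l) = ((0:ℤ):ℝ) • av l := by module
      rw [h]; exact smul_av_mem_Ga 0
    · refine ⟨g + (n:ℝ) • av l + ((2*n : ℤ):ℝ) • bv l,
        mem_CvC2dia_iff.mpr (Or.inr (Or.inr ⟨g, hg, n, n, by omega, rfl⟩)), ?_⟩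
      have h : (g + (n:ℝ) • av l + ((2*n : ℤ):ℝ) • bv l)
          - (g + ((2*n : ℤ):ℝ) • bv l) = (n:ℝ) • av l := by module
      rw [h]; exact smul_av_mem_Ga n

end AuxCvC
noncomputable section AuxBB
variable {l : ℕ}

lemma BB2star_S_mem (i : Fin l) (m n : ℤ) :
    εv l i + (m:ℝ) • av l + (n:ℝ) • bv l ∈ BB2star l :=
  mem_BB2star_iff.mpr (Or.inl ⟨εv l i, eps_mem_BCs i, m, n, rfl⟩)

lemma eps_mem_BB2star (i : Fin l) : εv l i ∈ BB2star l := by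
  have := BB2star_S_mem i 0 0
  simpa using this

lemma BB2star_nonisotropic : ∀ α ∈ BB2star l, Iform l α α ≠ 0 := by
  intro α hα
  rcases mem_BB2star_iff.mp hα with ⟨g, hg, m, n, rfl⟩ | ⟨g, hg, m, n, _, rfl⟩ |
    ⟨g, hg, m, n, rfl⟩
  · rw [Iform_gab, Iform_BCs_self hg]; norm_num
  · rw [Iform_gab, Iform_BCm_self hg]; norm_num
  · rw [Iform_gab, Iform_BCl_self hg]; norm_num

lemma BB2star_intvec : ∀ x ∈ BB2star l, IntVec x := by
  intro x hx
  rcases mem_BB2star_iff.mp hx with ⟨g, hg, m, n, rfl⟩ | ⟨g, hg, m, n, _, rfl⟩ |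
    ⟨g, hg, m, n, rfl⟩
  · exact ((intVec_BCs hg).add (intVec_av.zsmul m)).add (intVec_bv.zsmul n)
  · exact ((intVec_BCm hg).add (intVec_av.zsmul m)).add (intVec_bv.zsmul n)
  · exact ((intVec_BCl hg).add (intVec_av.zsmul _)).add (intVec_bv.zsmul _)

lemma BB2star_decomp : ∀ x ∈ BB2star l, ∃ g, (g ∈ BCs l ∨ g ∈ BCm l ∨ g ∈ BCl l) ∧
    ∃ a b : ℝ, x = g + a • av l + b • bv l := by
  intro x hx
  rcases mem_BB2star_iff.mp hx with ⟨g, hg, m, n, rfl⟩ | ⟨g, hg, m, n, _, rfl⟩ |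
    ⟨g, hg, m, n, rfl⟩
  · exact ⟨g, Or.inl hg, _, _, rfl⟩
  · exact ⟨g, Or.inr (Or.inl hg), _, _, rfl⟩
  · exact ⟨g, Or.inr (Or.inr hg), _, _, rfl⟩

lemma BB2star_reflects (hl2 : l = 2) :
    ∀ α ∈ BB2star l, reflV l α '' BB2star l = BB2star l := by
  intro α hα
  have hN : Iform l α α ≠ 0 := BB2star_nonisotropic α hα
  apply refl_image_eq hN
  intro x hx
  rcases mem_BB2star_iff.mp hα with ⟨f, hf, m2, n2, hαe⟩ | ⟨f, hf, m2, n2, hd2, hαe⟩ |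
    ⟨f, hf, m2, n2, hαe⟩ <;>
  rcases mem_BB2star_iff.mp hx with ⟨g, hg, m, n, hxe⟩ | ⟨g, hg, m, n, hd, hxe⟩ |
    ⟨g, hg, m, n, hxe⟩ <;> subst hαe hxe
  -- α short
  · obtain ⟨k, hk, hmem⟩ := refl_SS hg hf
    rw [reflV_eq (Iform_gab f f _ _ _ _) (Iform_gab g f _ _ _ _) hk (NS_ne hf)]
    exact mem_BB2star_iff.mpr (Or.inl ⟨g - (k:ℝ) • f, hmem, m - k*m2, n - k*n2,
      by push_cast; module⟩)
  · obtain ⟨k, hk, hmem, hdvd⟩ := refl_MS hg hf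
    obtain ⟨c, rfl⟩ := hdvd
    rw [reflV_eq (Iform_gab f f _ _ _ _) (Iform_gab g f _ _ _ _) hk (NS_ne hf)]
    refine mem_BB2star_iff.mpr (Or.inr (Or.inl ⟨g - ((2*c : ℤ):ℝ) • f, hmem,
      m - 2*c*m2, n - 2*c*n2, ?_, by push_cast; module⟩))
    obtain ⟨d, hd'⟩ := hd
    exact ⟨d - c*n2*m - c*m2*n + 2*c*c*m2*n2, by linear_combination hd'⟩
  · obtain ⟨k, hk, hmem, hdvd⟩ := refl_LS hg hf
    obtain ⟨c, rfl⟩ := hdvd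
    rw [reflV_eq (Iform_gab f f _ _ _ _) (Iform_gab g f _ _ _ _) hk (NS_ne hf)]
    exact mem_BB2star_iff.mpr (Or.inr (Or.inr ⟨g - ((4*c : ℤ):ℝ) • f, hmem,
      m - 2*c*m2, n - 2*c*n2, by push_cast; module⟩))
  -- α middle
  · obtain ⟨k, hk, hmem⟩ := refl_SM hg hf
    rw [reflV_eq (Iform_gab f f _ _ _ _) (Iform_gab g f _ _ _ _) hk (NM_ne hf)]
    exact mem_BB2star_iff.mpr (Or.inl ⟨g - (k:ℝ) • f, hmem, m - k*m2, n - k*n2,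
      by push_cast; module⟩)
  · obtain ⟨k, hk, hmem, hdvd⟩ := refl_MM hg hf
    obtain ⟨c, rfl⟩ := hdvd hl2
    rw [reflV_eq (Iform_gab f f _ _ _ _) (Iform_gab g f _ _ _ _) hk (NM_ne hf)]
    refine mem_BB2star_iff.mpr (Or.inr (Or.inl ⟨g - ((2*c : ℤ):ℝ) • f, hmem,
      m - 2*c*m2, n - 2*c*n2, ?_, by push_cast; module⟩))
    obtain ⟨d, hd'⟩ := hd
    exact ⟨d - c*n2*m - c*m2*n + 2*c*c*m2*n2, by linear_combination hd'⟩
  · obtain ⟨k, hk, hmem, hdvd⟩ := refl_LM hg hf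
    obtain ⟨c, rfl⟩ := hdvd
    rw [reflV_eq (Iform_gab f f _ _ _ _) (Iform_gab g f _ _ _ _) hk (NM_ne hf)]
    exact mem_BB2star_iff.mpr (Or.inr (Or.inr ⟨g - ((2*c : ℤ):ℝ) • f, hmem,
      m - c*m2, n - c*n2, by push_cast; module⟩))
  -- α long
  · obtain ⟨k, hk, hmem⟩ := refl_SL hg hf
    rw [reflV_eq (Iform_gab f f _ _ _ _) (Iform_gab g f _ _ _ _) hk (NL_ne hf)]
    exact mem_BB2star_iff.mpr (Or.inl ⟨g - (k:ℝ) • f, hmem, m - 2*k*m2, n - 2*k*n2,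
      by push_cast; module⟩)
  · obtain ⟨k, hk, hmem⟩ := refl_ML hg hf
    rw [reflV_eq (Iform_gab f f _ _ _ _) (Iform_gab g f _ _ _ _) hk (NL_ne hf)]
    refine mem_BB2star_iff.mpr (Or.inr (Or.inl ⟨g - (k:ℝ) • f, hmem,
      m - 2*k*m2, n - 2*k*n2, ?_, by push_cast; module⟩))
    obtain ⟨d, hd'⟩ := hd
    exact ⟨d - k*n2*m - k*m2*n + 2*k*k*m2*n2, by linear_combination hd'⟩
  · obtain ⟨k, hk, hmem, hdvd⟩ := refl_LL hg hf
    obtain ⟨c, rfl⟩ := hdvd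
    rw [reflV_eq (Iform_gab f f _ _ _ _) (Iform_gab g f _ _ _ _) hk (NL_ne hf)]
    exact mem_BB2star_iff.mpr (Or.inr (Or.inr ⟨g - ((2*c : ℤ):ℝ) • f, hmem,
      m - 2*c*m2, n - 2*c*n2, by push_cast; module⟩))

lemma BB2star_isERS (hl : 1 ≤ l) (hl2 : l = 2) : IsERS l (BB2star l) := by
  refine ⟨discrete_of_intvec BB2star_intvec, ?_, BB2star_nonisotropic,
    integral_of_decomp BB2star_decomp, BB2star_reflects hl2,
    irred_of BB2star_nonisotropic eps_mem_BB2star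
      (fun i j hij => mem_BB2star_iff.mpr
        (Or.inr (Or.inl ⟨εv l i + εv l j, mid_mem_BCm hij, 0, 0, by omega,
          by push_cast; module⟩)))⟩
  apply span_top_of
  · exact fun i => Submodule.subset_span (eps_mem_BB2star i)
  · have h1 : εv l ⟨0, hl⟩ + av l ∈ BB2star l := by
      have := BB2star_S_mem ⟨0, hl⟩ 1 0
      simpa using this
    have : av l = (εv l ⟨0, hl⟩ + av l) - εv l ⟨0, hl⟩ := by module
    rw [this]
    exact sub_mem (Submodule.subset_span h1)
      (Submodule.subset_span (eps_mem_BB2star ⟨0, hl⟩))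
  · have h1 : εv l ⟨0, hl⟩ + bv l ∈ BB2star l := by
      have := BB2star_S_mem ⟨0, hl⟩ 0 1
      simpa using this
    have : bv l = (εv l ⟨0, hl⟩ + bv l) - εv l ⟨0, hl⟩ := by module
    rw [this]
    exact sub_mem (Submodule.subset_span h1)
      (Submodule.subset_span (eps_mem_BB2star ⟨0, hl⟩))

lemma BB2star_nonreduced (hl : 1 ≤ l) : IsNonReducedRS l (BB2star l) := by
  refine ⟨εv l ⟨0, hl⟩, eps_mem_BB2star _, ?_⟩
  exact mem_BB2star_iff.mpr (Or.inr (Or.inr ⟨(2:ℝ) • εv l ⟨0, hl⟩,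
    two_eps_mem_BCl _, 0, 0, by push_cast; module⟩))

lemma BB2star_marking (hl : 1 ≤ l) : IsMarking l (BB2star l) (Ga l) := by
  apply marking_of (eps_mem_BB2star ⟨0, hl⟩)
  have := BB2star_S_mem ⟨0, hl⟩ 1 0
  simpa using this

lemma BB2star_quot : (Ga l).mkQ '' BB2star l = (Ga l).mkQ '' Aff l .BBv := by
  apply mkQ_image_eq
  · intro x hx
    rcases mem_BB2star_iff.mp hx with ⟨g, hg, m, n, rfl⟩ | ⟨g, hg, m, n, _, rfl⟩ |
      ⟨g, hg, m, n, rfl⟩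
    · refine ⟨g + (n:ℝ) • bv l, mem_Aff_BBv_iff.mpr (Or.inl ⟨g, hg, n, rfl⟩), ?_⟩
      have h : (g + (m:ℝ) • av l + (n:ℝ) • bv l) - (g + (n:ℝ) • bv l)
          = (m:ℝ) • av l := by module
      rw [h]; exact smul_av_mem_Ga m
    · refine ⟨g + (n:ℝ) • bv l,
        mem_Aff_BBv_iff.mpr (Or.inr (Or.inl ⟨g, hg, n, rfl⟩)), ?_⟩
      have h : (g + (m:ℝ) • av l + (n:ℝ) • bv l) - (g + (n:ℝ) • bv l)
          = (m:ℝ) • av l := by module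
      rw [h]; exact smul_av_mem_Ga m
    · refine ⟨g + ((2*n : ℤ):ℝ) • bv l,
        mem_Aff_BBv_iff.mpr (Or.inr (Or.inr ⟨g, hg, n, rfl⟩)), ?_⟩
      have h : (g + ((2*m : ℤ):ℝ) • av l + ((2*n : ℤ):ℝ) • bv l)
          - (g + ((2*n : ℤ):ℝ) • bv l) = ((2*m : ℤ):ℝ) • av l := by module
      rw [h]; exact smul_av_mem_Ga (2*m)
  · intro y hy
    rcases mem_Aff_BBv_iff.mp hy with ⟨g, hg, n, rfl⟩ | ⟨g, hg, n, rfl⟩ |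
      ⟨g, hg, n, rfl⟩
    · refine ⟨g + ((0:ℤ):ℝ) • av l + (n:ℝ) • bv l,
        mem_BB2star_iff.mpr (Or.inl ⟨g, hg, 0, n, rfl⟩), ?_⟩
      have h : (g + ((0:ℤ):ℝ) • av l + (n:ℝ) • bv l) - (g + (n:ℝ) • bv l)
          = ((0:ℤ):ℝ) • av l := by module
      rw [h]; exact smul_av_mem_Ga 0
    · refine ⟨g + ((0:ℤ):ℝ) • av l + (n:ℝ) • bv l,
        mem_BB2star_iff.mpr (Or.inr (Or.inl ⟨g, hg, 0, n, ⟨0, by ring⟩, rfl⟩)), ?_⟩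
      have h : (g + ((0:ℤ):ℝ) • av l + (n:ℝ) • bv l) - (g + (n:ℝ) • bv l)
          = ((0:ℤ):ℝ) • av l := by module
      rw [h]; exact smul_av_mem_Ga 0
    · refine ⟨g + ((2*(0:ℤ) : ℤ):ℝ) • av l + ((2*n : ℤ):ℝ) • bv l,
        mem_BB2star_iff.mpr (Or.inr (Or.inr ⟨g, hg, 0, n, rfl⟩)), ?_⟩
      have h : (g + ((2*(0:ℤ) : ℤ):ℝ) • av l + ((2*n : ℤ):ℝ) • bv l)
          - (g + ((2*n : ℤ):ℝ) • bv l) = ((0:ℤ):ℝ) • av l := by push_cast; module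
      rw [h]; exact smul_av_mem_Ga 0

end AuxBB
noncomputable section

/-- **Well-definedness of the isolated system `BB_2^{∨(2)∗}` and of the ◇-type system
`C^∨C_l^{(2)◇}`.** -/
theorem isolated_and_diamond_well_defined {l : ℕ} (hl : 1 ≤ l) :
    (l = 2 →
      IsERS l (BB2star l) ∧ IsNonReducedRS l (BB2star l) ∧
        IsMarking l (BB2star l) (Ga l) ∧
        (Ga l).mkQ '' BB2star l = (Ga l).mkQ '' Aff l .BBv) ∧
    (IsERS l (CvC2dia l) ∧ IsNonReducedRS l (CvC2dia l) ∧
      IsMarking l (CvC2dia l) (Ga l) ∧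
      (Ga l).mkQ '' CvC2dia l = (Ga l).mkQ '' Aff l .CvC) := by
  constructor
  · intro hl2
    exact ⟨BB2star_isERS hl hl2, BB2star_nonreduced hl, BB2star_marking hl,
      BB2star_quot⟩
  · exact ⟨CvC2dia_isERS hl, CvC2dia_nonreduced hl, CvC2dia_marking hl,
      CvC2dia_quot⟩

end
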